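/- The mean fitness λ of any quasispecies solution for the sharp peak fitness function on E = 𝒜^ℓ satisfies the identity 1/(σ−1) = κ^{−ℓ} Σ_{k=0}^{ℓ} C(ℓ,k) (κ−1)^k · 1/(λ/ρ^k − 1), where C(ℓ,k) is the binomial coefficient and ρ = 1 − κq/(κ−1). -/

import Mathlib

open scoped BigOperators

/-- The Bratus–Novozhilov–Semenov equation for the mean fitness on the sharp peak
landscape: `1/(σ-1) = κ^{-ℓ} ∑_{k=0}^{ℓ} C(ℓ,k)(κ-1)^k / (λ/ρ^k - 1)`. -/
theorem mean_fitness_binomial_equation_sharp_peak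
    (A : Type*) [Fintype A] [DecidableEq A] (κ ℓ : ℕ)
    (hκ : Fintype.card A = κ) (hκ2 : 2 ≤ κ) (hℓ : 1 ≤ ℓ)
    (q : ℝ) (hq0 : 0 < q) (hq1 : q < ((κ : ℝ) - 1) / κ)
    (ρ : ℝ) (hρ : ρ = 1 - κ * q / ((κ : ℝ) - 1))
    (σ : ℝ) (hσ : 1 < σ) (wstar : Fin ℓ → A)
    (f : (Fin ℓ → A) → ℝ) (hf : ∀ u, f u = if u = wstar then σ else 1)
    (M : Matrix (Fin ℓ → A) (Fin ℓ → A) ℝ)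
    (hM : ∀ u v, M u v =
      (q / ((κ : ℝ) - 1)) ^ hammingDist u v * (1 - q) ^ (ℓ - hammingDist u v))
    (x : (Fin ℓ → A) → ℝ) (hx0 : ∀ u, 0 ≤ x u) (hx1 : ∑ u, x u = 1)
    (hqs : ∀ u, x u * (∑ v, x v * f v) = ∑ v, x v * f v * M v u)
    (lam : ℝ) (hlam : lam = ∑ v, x v * f v) :
    1 / (σ - 1) =
      ((κ : ℝ) ^ ℓ)⁻¹ *
        ∑ k ∈ Finset.range (ℓ + 1),
          (Nat.choose ℓ k : ℝ) * ((κ : ℝ) - 1) ^ k * (lam / ρ ^ k - 1)⁻¹ := by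
  classical
  -- basic numeric facts
  have hκR : (2:ℝ) ≤ (κ:ℝ) := by exact_mod_cast hκ2
  have hκ0 : (0:ℝ) < (κ:ℝ) := by linarith
  have hκ1 : (0:ℝ) < (κ:ℝ) - 1 := by linarith
  have hκne : (κ:ℝ) ≠ 0 := ne_of_gt hκ0
  have hκ1ne : (κ:ℝ) - 1 ≠ 0 := ne_of_gt hκ1
  have hqκ : q * κ < (κ:ℝ) - 1 := (lt_div_iff₀ hκ0).mp hq1
  have hq1' : q < 1 := by nlinarith
  have hρ0 : 0 < ρ := by
    rw [hρ]
    have : (κ:ℝ) * q / ((κ:ℝ) - 1) < 1 := by rw [div_lt_one hκ1]; nlinarith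
    linarith
  have hρ1 : ρ < 1 := by
    rw [hρ]
    have : 0 < (κ:ℝ) * q / ((κ:ℝ) - 1) := by positivity
    linarith
  -- per-site mutation matrix
  set m : A → A → ℝ := fun a b => if a = b then 1 - q else q / ((κ:ℝ) - 1) with hm
  have hMfact : ∀ v u : Fin ℓ → A, M v u = ∏ i, m (v i) (u i) := by
    intro v u
    rw [hM]
    have : (∏ i, m (v i) (u i))
        = ∏ i : Fin ℓ, (if v i = u i then 1 - q else q / ((κ:ℝ) - 1)) := rfl
    rw [this, Finset.prod_ite, Finset.prod_const, Finset.prod_const]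
    have hd : hammingDist v u
        = (Finset.univ.filter (fun i => ¬ v i = u i)).card := by
      simp [hammingDist, Ne]
    have hcards : (Finset.univ.filter (fun i => v i = u i)).card
        = ℓ - hammingDist v u := by
      have h := Finset.card_filter_add_card_filter_not
        (s := (Finset.univ : Finset (Fin ℓ))) (p := fun i => v i = u i)
      simp only [Finset.card_univ, Fintype.card_fin] at h
      omega
    rw [hd, hcards, ← hd, mul_comm]
  have hmpos : ∀ a b, 0 < m a b := by
    intro a b
    simp only [hm]
    split
    · linarith
    · positivity
  have hMpos : ∀ v u, 0 < M v u := by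
    intro v u
    rw [hMfact]
    exact Finset.prod_pos fun i _ => hmpos _ _
  -- per-site split and row sums
  have hmsplit : ∀ a b : A, m a b = q / ((κ:ℝ) - 1) + (if a = b then ρ else 0) := by
    intro a b
    simp only [hm]
    split
    · rw [hρ]; field_simp; ring
    · ring
  have hmsum : ∀ a : A, ∑ b, m a b = 1 := by
    intro a
    rw [Finset.sum_congr rfl fun b _ => hmsplit a b, Finset.sum_add_distrib,
        Finset.sum_const, Finset.sum_ite_eq]
    simp only [Finset.mem_univ, if_true, Finset.card_univ, hκ, nsmul_eq_mul]
    rw [hρ]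
    field_simp
    ring
  -- the centered indicator test functions
  set e : Fin ℓ → A → ℝ := fun i b => (if b = wstar i then 1 else 0) - 1/κ with he
  have hme : ∀ (i : Fin ℓ) (a : A), ∑ b, m a b * e i b = ρ * e i a := by
    intro i a
    have hsplit : ∀ b, m a b * e i b
        = (if b = wstar i then m a b else 0) - m a b * (1/κ) := by
      intro b
      simp only [he]
      split <;> ring
    rw [Finset.sum_congr rfl fun b _ => hsplit b, Finset.sum_sub_distrib,
        Finset.sum_ite_eq' Finset.univ (wstar i) (fun b => m a b),
        ← Finset.sum_mul, hmsum]
    simp only [Finset.mem_univ, if_true, one_mul, he]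
    simp only [hm]
    by_cases hA : a = wstar i
    · simp only [hA, if_pos rfl, if_pos rfl, ↓reduceIte]
      rw [hρ]; field_simp; ring
    · rw [if_neg hA, if_neg hA]
      rw [hρ]; field_simp; ring
  set φ : Finset (Fin ℓ) → (Fin ℓ → A) → ℝ := fun T u => ∏ i ∈ T, e i (u i) with hφ
  -- φ T is an eigenfunction of M with eigenvalue ρ^|T|
  have hMφ : ∀ (T : Finset (Fin ℓ)) (v : Fin ℓ → A),
      ∑ u, M v u * φ T u = ρ ^ T.card * φ T v := by
    intro T v
    have step : ∀ u : Fin ℓ → A, M v u * φ T u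
        = ∏ i, (m (v i) (u i) * (if i ∈ T then e i (u i) else 1)) := by
      intro u
      rw [hMfact, Finset.prod_mul_distrib]
      congr 1
      rw [Finset.prod_ite_mem Finset.univ T (fun i => e i (u i)), Finset.univ_inter]
    calc ∑ u, M v u * φ T u
        = ∑ u : Fin ℓ → A, ∏ i, (m (v i) (u i) * (if i ∈ T then e i (u i) else 1)) :=
          Finset.sum_congr rfl fun u _ => step u
      _ = ∏ i, ∑ b, (m (v i) b * (if i ∈ T then e i b else 1)) :=
          (Fintype.prod_sum (fun i b => m (v i) b * (if i ∈ T then e i b else 1))).symm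
      _ = ∏ i, (if i ∈ T then ρ * e i (v i) else 1) := by
          refine Finset.prod_congr rfl fun i _ => ?_
          by_cases hi : i ∈ T
          · simp only [hi, if_true]
            exact hme i (v i)
          · simp only [hi, if_false, mul_one]
            exact hmsum (v i)
      _ = ρ ^ T.card * φ T v := by
          rw [Finset.prod_ite_mem Finset.univ T (fun i => ρ * e i (v i)),
            Finset.univ_inter, Finset.prod_mul_distrib, Finset.prod_const]
  -- sharp-peak summation helper
  have hfsum : ∀ g : (Fin ℓ → A) → ℝ,
      ∑ v, x v * f v * g v = (∑ v, x v * g v) + (σ - 1) * x wstar * g wstar := by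
    intro g
    have hpt : ∀ v, x v * f v * g v
        = x v * g v + (if v = wstar then (σ - 1) * x v * g v else 0) := by
      intro v
      rw [hf]
      split_ifs with h
      · subst h; ring
      · ring
    rw [Finset.sum_congr rfl fun v _ => hpt v, Finset.sum_add_distrib,
        Finset.sum_ite_eq' Finset.univ wstar (fun v => (σ - 1) * x v * g v)]
    simp
  have hlam1 : lam = 1 + (σ - 1) * x wstar := by
    have h := hfsum (fun _ => 1)
    simp only [mul_one] at h
    rw [hlam, h, hx1]
  have hfpos : ∀ v, 0 < f v := by
    intro v
    rw [hf]
    split <;> linarith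
  -- positivity of x wstar
  have hxspos : 0 < x wstar := by
    rcases (hx0 wstar).lt_or_eq with h | h
    · exact h
    · exfalso
      have hq' := hqs wstar
      have hz : ∑ v, x v * f v * M v wstar = 0 := by rw [← hq', ← h, zero_mul]
      have hall := (Finset.sum_eq_zero_iff_of_nonneg (fun v _ =>
        mul_nonneg (mul_nonneg (hx0 v) (hfpos v).le) (hMpos v wstar).le)).mp hz
      have hx0' : ∀ v : Fin ℓ → A, x v = 0 := by
        intro v
        have := hall v (Finset.mem_univ v)
        have h1 : f v ≠ 0 := (hfpos v).ne'
        have h2 : M v wstar ≠ 0 := (hMpos v wstar).ne'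
        rcases mul_eq_zero.mp this with h3 | h3
        · rcases mul_eq_zero.mp h3 with h4 | h4
          · exact h4
          · exact absurd h4 h1
        · exact absurd h3 h2
      rw [Finset.sum_congr rfl fun v _ => hx0' v, Finset.sum_const, smul_zero] at hx1
      exact one_ne_zero hx1.symm
  have hlamgt : ∀ k : ℕ, ρ ^ k < lam := by
    intro k
    have h1 : ρ ^ k ≤ 1 := pow_le_one₀ hρ0.le hρ1.le
    have h2 : 1 < lam := by rw [hlam1]; nlinarith
    linarith
  -- projected quasispecies equation
  set y : Finset (Fin ℓ) → ℝ := fun T => ∑ u, x u * φ T u with hy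
  have hphiw : ∀ T : Finset (Fin ℓ), φ T wstar = (((κ:ℝ) - 1)/κ) ^ T.card := by
    intro T
    have hpt : ∀ i ∈ T, e i (wstar i) = ((κ:ℝ) - 1)/κ := by
      intro i _
      simp only [he, if_pos rfl, ↓reduceIte]
      field_simp
    simp only [hφ]
    rw [Finset.prod_congr rfl hpt, Finset.prod_const]
  have hproj : ∀ T : Finset (Fin ℓ),
      (lam - ρ ^ T.card) * y T
        = (σ - 1) * x wstar * (ρ * (((κ:ℝ) - 1)/κ)) ^ T.card := by
    intro T
    have h1 : ∑ u, (x u * (∑ v, x v * f v)) * φ T u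
        = ∑ u, (∑ v, x v * f v * M v u) * φ T u :=
      Finset.sum_congr rfl fun u _ => by rw [hqs u]
    have hL : ∑ u, (x u * (∑ v, x v * f v)) * φ T u = lam * y T := by
      rw [hy, Finset.mul_sum, ← hlam]
      exact Finset.sum_congr rfl fun u _ => by ring
    have hR : ∑ u, (∑ v, x v * f v * M v u) * φ T u
        = ρ ^ T.card * (y T + (σ - 1) * x wstar * φ T wstar) := by
      calc ∑ u, (∑ v, x v * f v * M v u) * φ T u
          = ∑ u, ∑ v, x v * f v * M v u * φ T u :=
            Finset.sum_congr rfl fun u _ => by rw [Finset.sum_mul]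
        _ = ∑ v, ∑ u, x v * f v * M v u * φ T u := Finset.sum_comm
        _ = ∑ v, x v * f v * (ρ ^ T.card * φ T v) := by
            refine Finset.sum_congr rfl fun v _ => ?_
            rw [← hMφ T v, Finset.mul_sum]
            exact Finset.sum_congr rfl fun u _ => by ring
        _ = (∑ v, x v * (ρ ^ T.card * φ T v))
            + (σ - 1) * x wstar * (ρ ^ T.card * φ T wstar) :=
            hfsum (fun v => ρ ^ T.card * φ T v)
        _ = ρ ^ T.card * (y T + (σ - 1) * x wstar * φ T wstar) := by
            rw [hy, mul_add, Finset.mul_sum]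
            congr 1
            · exact Finset.sum_congr rfl fun v _ => by ring
            · ring
    have key : lam * y T = ρ ^ T.card * (y T + (σ - 1) * x wstar * φ T wstar) :=
      hL.symm.trans (h1.trans hR)
    rw [hphiw T] at key
    rw [mul_pow]
    linear_combination key
  have hyval : ∀ T : Finset (Fin ℓ),
      y T = (σ - 1) * x wstar * (ρ * (((κ:ℝ) - 1)/κ)) ^ T.card / (lam - ρ ^ T.card) := by
    intro T
    have hne : lam - ρ ^ T.card ≠ 0 := by have := hlamgt T.card; linarith
    rw [eq_div_iff hne]
    linear_combination hproj T
  -- expand x wstar over the test functions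
  have hind : ∀ u : Fin ℓ → A, (if u = wstar then (1:ℝ) else 0)
      = ∑ T : Finset (Fin ℓ), φ T u * ((1:ℝ)/κ) ^ (ℓ - T.card) := by
    intro u
    have hprod : (if u = wstar then (1:ℝ) else 0)
        = ∏ i, (e i (u i) + 1/κ) := by
      have hfac : ∀ i, e i (u i) + 1/κ = (if u i = wstar i then (1:ℝ) else 0) := by
        intro i
        by_cases h : u i = wstar i <;> simp [he, h]
      rw [Finset.prod_congr rfl fun i _ => hfac i]
      by_cases h : u = wstar
      · subst h; simp
      · rw [if_neg h]
        obtain ⟨i, hi⟩ : ∃ i, u i ≠ wstar i := by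
          by_contra hc
          push_neg at hc
          exact h (funext hc)
        exact (Finset.prod_eq_zero (Finset.mem_univ i) (by rw [if_neg hi])).symm
    rw [hprod, Fintype.prod_add]
    refine Finset.sum_congr rfl fun T _ => ?_
    rw [Finset.prod_const]
    congr 1
    rw [Finset.card_compl, Fintype.card_fin]
  have hxstar : x wstar = ∑ T : Finset (Fin ℓ), y T * ((1:ℝ)/κ) ^ (ℓ - T.card) := by
    have h0 : ∑ u, x u * (if u = wstar then (1:ℝ) else 0) = x wstar := by
      simp
    calc x wstar = ∑ u, x u * (if u = wstar then (1:ℝ) else 0) := h0.symm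
      _ = ∑ u, ∑ T : Finset (Fin ℓ), x u * (φ T u * ((1:ℝ)/κ) ^ (ℓ - T.card)) := by
          refine Finset.sum_congr rfl fun u _ => ?_
          rw [hind u, Finset.mul_sum]
      _ = ∑ T : Finset (Fin ℓ), ∑ u, x u * (φ T u * ((1:ℝ)/κ) ^ (ℓ - T.card)) :=
          Finset.sum_comm
      _ = ∑ T : Finset (Fin ℓ), y T * ((1:ℝ)/κ) ^ (ℓ - T.card) := by
          refine Finset.sum_congr rfl fun T _ => ?_
          rw [hy, Finset.sum_mul]
          exact Finset.sum_congr rfl fun u _ => by ring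
  -- the scalar equation
  set g : ℕ → ℝ :=
    fun k => (ρ * (((κ:ℝ) - 1)/κ)) ^ k / (lam - ρ ^ k) * ((1:ℝ)/κ) ^ (ℓ - k) with hg
  have hmain : 1 = (σ - 1) * ∑ T : Finset (Fin ℓ), g T.card := by
    have h1 : ∑ T : Finset (Fin ℓ), y T * ((1:ℝ)/κ) ^ (ℓ - T.card)
        = (σ - 1) * x wstar * ∑ T : Finset (Fin ℓ), g T.card := by
      rw [Finset.mul_sum]
      refine Finset.sum_congr rfl fun T _ => ?_
      rw [hyval T]
      simp only [hg]
      ring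
    have h1' : x wstar = (σ - 1) * x wstar * ∑ T : Finset (Fin ℓ), g T.card :=
      hxstar.trans h1
    have h2 : x wstar * 1 = x wstar * ((σ - 1) * ∑ T : Finset (Fin ℓ), g T.card) := by
      linear_combination h1'
    exact mul_left_cancel₀ hxspos.ne' h2
  -- regroup by cardinality
  have hgroup : (∑ T : Finset (Fin ℓ), g T.card)
      = ∑ k ∈ Finset.range (ℓ + 1), (Nat.choose ℓ k : ℝ) * g k := by
    have hcu : (Finset.univ : Finset (Fin ℓ)).card = ℓ := by simp
    rw [← Finset.powerset_univ, Finset.powerset_card_disjiUnion (Finset.univ : Finset (Fin ℓ)), Finset.sum_disjiUnion _ _ (Finset.univ.pairwise_disjoint_powersetCard.set_pairwise _), hcu]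
    refine Finset.sum_congr rfl fun k _ => ?_
    rw [Finset.sum_congr rfl (fun T hT => by
        rw [(Finset.mem_powersetCard.mp hT).2]),
      Finset.sum_const, Finset.card_powersetCard, hcu, nsmul_eq_mul]
  -- final algebra
  have hterm : ∀ k ∈ Finset.range (ℓ + 1),
      (Nat.choose ℓ k : ℝ) * g k
        = ((κ:ℝ) ^ ℓ)⁻¹ * ((Nat.choose ℓ k : ℝ) * ((κ:ℝ) - 1) ^ k * (lam / ρ ^ k - 1)⁻¹) := by
    intro k hk
    have hkℓ : k ≤ ℓ := Nat.lt_succ_iff.mp (Finset.mem_range.mp hk)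
    have hρk : (0:ℝ) < ρ ^ k := pow_pos hρ0 k
    have hne : lam - ρ ^ k ≠ 0 := by have := hlamgt k; linarith
    have hinv : (lam / ρ ^ k - 1)⁻¹ = ρ ^ k / (lam - ρ ^ k) := by
      rw [show lam / ρ ^ k - 1 = (lam - ρ ^ k) / ρ ^ k by field_simp, inv_div]
    have hκpow : (κ:ℝ) ^ ℓ = (κ:ℝ) ^ k * (κ:ℝ) ^ (ℓ - k) := by
      rw [← pow_add, Nat.add_sub_cancel' hkℓ]
    simp only [hg]
    rw [hinv, hκpow, mul_pow, div_pow, one_div, inv_pow]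
    have hκk : ((κ:ℝ) ^ k) ≠ 0 := pow_ne_zero _ hκne
    have hκlk : ((κ:ℝ) ^ (ℓ - k)) ≠ 0 := pow_ne_zero _ hκne
    field_simp
  rw [hgroup] at hmain
  rw [Finset.sum_congr rfl hterm, ← Finset.mul_sum] at hmain
  have hσ1 : σ - 1 ≠ 0 := by linarith
  rw [eq_comm, eq_div_iff hσ1]
  linear_combination -hmain
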